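/- Fix constants C ≥ 0 and r > 0. Let X_i and X be metric spaces with ε_i-Hausdorff approximations h_i : X_i → X, ε_i → 0. Let A_i ⊆ X_i and A ⊆ X be nonempty subsets, each equipped with a second metric δ_i on A_i and δ on A. Suppose there are maps σ_i : A → A_i such that d_X(h_i(σ_i(a)), a) ≤ ε_i for all a ∈ A and |δ_i(σ_i(a), σ_i(b)) − δ(a,b)| ≤ ε_i for all a, b ∈ A (i.e. the subsets A_i converge to A as subsets compatibly with a Gromov-Hausdorff convergence (A_i, δ_i) → (A, δ)). If each (A_i, δ_i) is (C,2,r)-convex in X_i, i.e. for every w ∈ A_i and all x, y ∈ A_i with d_{X_i}(x,w) ≤ r and d_{X_i}(y,w) ≤ r one has δ_i(x,y) ≤ d_{X_i}(x,y) + C·d_{X_i}(x,y)³, then (A, δ) is (C,2,r/2)-convex in X: for every z ∈ A and all x, y ∈ A with d_X(x,z) ≤ r/2 and d_X(y,z) ≤ r/2 one has δ(x,y) ≤ d_X(x,y) + C·d_X(x,y)³. -/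

import Mathlib

set_option maxHeartbeats 1000000 in
/-- `(C,2,r)`-convexity passes to Gromov–Hausdorff limits of subsets:
if `(A i, δi i)` are `(C,2,r)`-convex in `X i`, the `X i` converge to `X₀` via Hausdorff
approximations `h i`, and the subsets `A i` converge to `A₀ ⊆ X₀` compatibly with a
Gromov–Hausdorff convergence `(A i, δi i) → (A₀, δ)` (witnessed by maps `σ i : A₀ → A i`),
then `(A₀, δ)` is `(C,2,r/2)`-convex in `X₀`. -/
theorem stmt_3
    (C r : ℝ) (hC : 0 ≤ C) (hr : 0 < r)
    (X : ℕ → Type*) [∀ i, MetricSpace (X i)]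
    (X₀ : Type*) [MetricSpace X₀]
    (ε : ℕ → ℝ) (hε : Filter.Tendsto ε Filter.atTop (nhds 0))
    (h : ∀ i, X i → X₀)
    (hh : ∀ i, (∀ a b : X i, |dist (h i a) (h i b) - dist a b| ≤ ε i) ∧
      ∀ x : X₀, ∃ a : X i, dist x (h i a) ≤ ε i)
    (A : ∀ i, Set (X i)) (hAne : ∀ i, (A i).Nonempty)
    (A₀ : Set X₀) (hA₀ne : A₀.Nonempty)
    -- the second metrics δi on A i and δ on A₀
    (δi : ∀ i, X i → X i → ℝ) (δ : X₀ → X₀ → ℝ)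
    (hδi_nonneg : ∀ i, ∀ x ∈ A i, ∀ y ∈ A i, 0 ≤ δi i x y)
    (hδi_self : ∀ i, ∀ x ∈ A i, δi i x x = 0)
    (hδi_symm : ∀ i, ∀ x ∈ A i, ∀ y ∈ A i, δi i x y = δi i y x)
    (hδi_tri : ∀ i, ∀ x ∈ A i, ∀ y ∈ A i, ∀ z ∈ A i, δi i x z ≤ δi i x y + δi i y z)
    (hδ_nonneg : ∀ x ∈ A₀, ∀ y ∈ A₀, 0 ≤ δ x y)
    (hδ_self : ∀ x ∈ A₀, δ x x = 0)
    (hδ_symm : ∀ x ∈ A₀, ∀ y ∈ A₀, δ x y = δ y x)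
    (hδ_tri : ∀ x ∈ A₀, ∀ y ∈ A₀, ∀ z ∈ A₀, δ x z ≤ δ x y + δ y z)
    -- the subsets A i converge to A₀ compatibly with a GH-convergence (A i, δi) → (A₀, δ)
    (σ : ∀ i, X₀ → X i)
    (hσmem : ∀ i, ∀ a ∈ A₀, σ i a ∈ A i)
    (hσ1 : ∀ i, ∀ a ∈ A₀, dist (h i (σ i a)) a ≤ ε i)
    (hσ2 : ∀ i, ∀ a ∈ A₀, ∀ b ∈ A₀, |δi i (σ i a) (σ i b) - δ a b| ≤ ε i)
    -- each (A i, δi i) is (C,2,r)-convex in X i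
    (hCconv : ∀ i, ∀ w ∈ A i, ∀ x ∈ A i, ∀ y ∈ A i,
      dist x w ≤ r → dist y w ≤ r → δi i x y ≤ dist x y + C * dist x y ^ 3) :
    -- conclusion: (A₀, δ) is (C,2,r/2)-convex in X₀
    ∀ z ∈ A₀, ∀ x ∈ A₀, ∀ y ∈ A₀, dist x z ≤ r / 2 → dist y z ≤ r / 2 →
      δ x y ≤ dist x y + C * dist x y ^ 3 := by
  intro z hz x hx y hy hxz hyz
  set d := dist x y with hd
  have hd0 : 0 ≤ d := dist_nonneg
  -- the limit of the upper bounds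
  have hlim : Filter.Tendsto (fun i => (d + 3 * ε i) + C * (d + 3 * ε i) ^ 3 + ε i)
      Filter.atTop (nhds ((d + 3 * 0) + C * (d + 3 * 0) ^ 3 + 0)) := by
    have hc : Continuous fun t : ℝ => (d + 3 * t) + C * (d + 3 * t) ^ 3 + t := by continuity
    exact (hc.tendsto 0).comp hε
  simp only [mul_zero, add_zero] at hlim
  refine ge_of_tendsto hlim ?_
  have hev : ∀ᶠ i in Filter.atTop, ε i < r / 6 := by
    have h6 : (0 : ℝ) < r / 6 := by linarith
    exact hε.eventually_lt_const h6
  filter_upwards [hev] with i hεi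
  have hεnn : 0 ≤ ε i := le_trans (abs_nonneg _) (hσ2 i x hx x hx)
  -- dist bound helpers
  have key : ∀ a ∈ A₀, ∀ b ∈ A₀, dist (σ i a) (σ i b) ≤ dist a b + 3 * ε i := by
    intro a ha b hb
    have h1 := (hh i).1 (σ i a) (σ i b)
    have h2 := hσ1 i a ha
    have h3 := hσ1 i b hb
    have h4 : dist (σ i a) (σ i b) ≤ dist (h i (σ i a)) (h i (σ i b)) + ε i := by
      have := abs_le.mp h1
      linarith [this.2]
    have h5 : dist (h i (σ i a)) (h i (σ i b)) ≤ ε i + dist a b + ε i := by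
      calc dist (h i (σ i a)) (h i (σ i b))
          ≤ dist (h i (σ i a)) a + dist a (h i (σ i b)) := dist_triangle _ _ _
        _ ≤ ε i + (dist a b + dist b (h i (σ i b))) := by
            have := dist_triangle a b (h i (σ i b))
            have h3' : dist b (h i (σ i b)) ≤ ε i := by rwa [dist_comm] at h3
            linarith
        _ ≤ ε i + dist a b + ε i := by
            have h3' : dist b (h i (σ i b)) ≤ ε i := by rwa [dist_comm] at h3
            linarith
    linarith
  have hxmem := hσmem i x hx
  have hymem := hσmem i y hy
  have hzmem := hσmem i z hz
  have hxzi : dist (σ i x) (σ i z) ≤ r := by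
    have := key x hx z hz; linarith
  have hyzi : dist (σ i y) (σ i z) ≤ r := by
    have := key y hy z hz; linarith
  have hconv := hCconv i (σ i z) hzmem (σ i x) hxmem (σ i y) hymem hxzi hyzi
  have hxyi : dist (σ i x) (σ i y) ≤ d + 3 * ε i := key x hx y hy
  have hpow : C * dist (σ i x) (σ i y) ^ 3 ≤ C * (d + 3 * ε i) ^ 3 := by
    apply mul_le_mul_of_nonneg_left _ hC
    exact pow_le_pow_left₀ dist_nonneg hxyi 3
  have hδxy : δ x y ≤ δi i (σ i x) (σ i y) + ε i := by
    have := abs_le.mp (hσ2 i x hx y hy)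
    linarith [this.1]
  calc δ x y ≤ δi i (σ i x) (σ i y) + ε i := hδxy
    _ ≤ (dist (σ i x) (σ i y) + C * dist (σ i x) (σ i y) ^ 3) + ε i := by linarith
    _ ≤ (d + 3 * ε i) + C * (d + 3 * ε i) ^ 3 + ε i := by linarith
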